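/- Let 𝒪 := ω + ζ·η + ω*. The set 𝒢(𝒪) of gaps of 𝒪, equipped with the order induced from the completion 𝒞(𝒪), is order-isomorphic to 𝟏 + (Σ_{r∈ℝ} S_r) + 𝟏, where S_r := 𝟐 if r ∈ ℚ and S_r := 𝟏 if r is irrational. -/

import Mathlib

/-- A linear order is (Dedekind) complete if every nonempty subset bounded above has a
least upper bound. -/
def IsCompleteLO (α : Type*) [LinearOrder α] : Prop :=
  ∀ s : Set α, s.Nonempty → BddAbove s → ∃ a, IsLUB s a

/-- `e : α ↪o β` exhibits `β` as a completion of `α`: `β` is complete and no proper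
suborder of `β` containing (the image of) `α` is complete. -/
def IsCompletion {α β : Type*} [LinearOrder α] [LinearOrder β] (e : α ↪o β) : Prop :=
  IsCompleteLO β ∧ ∀ S : Set β, Set.range e ⊆ S → IsCompleteLO S → S = Set.univ

section CSide
variable {C : Type*} [LinearOrder C]

lemma subtype_complete {S : Set C}
    (h : ∀ t : Set C, t ⊆ S → t.Nonempty → (∃ b ∈ S, ∀ x ∈ t, x ≤ b) →
      ∃ a ∈ S, (∀ x ∈ t, x ≤ a) ∧ ∀ b ∈ S, (∀ x ∈ t, x ≤ b) → a ≤ b) :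
    IsCompleteLO S := by
  intro s hne hbdd
  obtain ⟨⟨b, hbS⟩, hb⟩ := hbdd
  obtain ⟨a, haS, ha1, ha2⟩ := h (Subtype.val '' s) (by rintro _ ⟨x, _, rfl⟩; exact x.2)
    (hne.image _) ⟨b, hbS, by rintro _ ⟨y, hy, rfl⟩; exact hb hy⟩
  refine ⟨⟨a, haS⟩, fun x hx => ha1 x ⟨x, hx, rfl⟩, fun b hb' => ha2 b b.2 ?_⟩
  rintro _ ⟨y, hy, rfl⟩; exact hb' hy

variable {α : Type*} [LinearOrder α] {e : α ↪o C}

lemma exists_isGLB (hc : IsCompleteLO C) (U : Set C) (hne : U.Nonempty) (hbdd : BddBelow U) :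
    ∃ d, IsGLB U d := by
  obtain ⟨u, hu⟩ := hne
  obtain ⟨a, ha⟩ := hc (lowerBounds U) hbdd ⟨u, fun x hx => hx hu⟩
  exact ⟨a, fun u' hu' => ha.2 fun x hx => hx hu', fun b hb => ha.1 hb⟩

end CSide

section Minimal
variable {C : Type*} [LinearOrder C] {α : Type*} [LinearOrder α] {e : α ↪o C}
variable {bot top : α} (hbot : ∀ x, bot ≤ x) (htop : ∀ x, x ≤ top) (hC : IsCompletion e)

include hC

include htop in
lemma le_etop : ∀ c : C, c ≤ e top := by
  intro c
  have hu := hC.2 (Set.Iic (e top)) (by rintro _ ⟨x, rfl⟩; exact e.le_iff_le.2 (htop x))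
    (subtype_complete (by
      intro t ht hne ⟨b, hbS, hb⟩
      obtain ⟨a, ha⟩ := hC.1 t hne ⟨b, fun x hx => hb x hx⟩
      exact ⟨a, le_trans (ha.2 fun x hx => hb x hx) hbS, fun x hx => ha.1 hx,
        fun b' _ hb' => ha.2 fun x hx => hb' x hx⟩))
  have : c ∈ Set.Iic (e top) := hu ▸ Set.mem_univ c
  exact this

include hbot in
lemma ebot_le : ∀ c : C, e bot ≤ c := by
  intro c
  have hu := hC.2 (Set.Ici (e bot)) (by rintro _ ⟨x, rfl⟩; exact e.le_iff_le.2 (hbot x))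
    (subtype_complete (by
      intro t ht hne ⟨b, hbS, hb⟩
      obtain ⟨a, ha⟩ := hC.1 t hne ⟨b, fun x hx => hb x hx⟩
      obtain ⟨x0, hx0⟩ := hne
      exact ⟨a, le_trans (ht hx0) (ha.1 hx0), fun x hx => ha.1 hx,
        fun b' _ hb' => ha.2 fun x hx => hb' x hx⟩))
  have : c ∈ Set.Ici (e bot) := hu ▸ Set.mem_univ c
  exact this

include hbot in
lemma lemA {c : C} (hc : c ∉ Set.range e) :
    IsLUB {x : C | x ∈ Set.range e ∧ x < c} c := by
  set L := {x : C | x ∈ Set.range e ∧ x < c} with hL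
  have hLne : L.Nonempty :=
    ⟨e bot, ⟨bot, rfl⟩, (ebot_le hbot hC c).lt_of_ne (fun h => hc ⟨bot, h⟩)⟩
  obtain ⟨d, hd⟩ := hC.1 L hLne ⟨c, fun x hx => hx.2.le⟩
  have hdc : d ≤ c := hd.2 fun x hx => hx.2.le
  rcases eq_or_lt_of_le hdc with rfl | hlt
  · exact hd
  · exfalso
    have hu := hC.2 (Set.Ioc d c)ᶜ
      (by rintro _ ⟨y, rfl⟩ ⟨h1, h2⟩
          exact absurd (hd.1 ⟨⟨y, rfl⟩, h2.lt_of_ne fun h => hc ⟨y, h⟩⟩) (not_le.2 h1))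
      (subtype_complete (by
        intro t ht hne ⟨b, hbS, hb⟩
        obtain ⟨a, ha⟩ := hC.1 t hne ⟨b, fun x hx => hb x hx⟩
        refine ⟨a, fun ⟨h1, h2⟩ => ?_, fun x hx => ha.1 hx,
          fun b' _ hb' => ha.2 fun x hx => hb' x hx⟩
        have : ∀ x ∈ t, x ≤ d := by
          intro x hx
          rcases le_or_gt x d with h | h
          · exact h
          · exact absurd ⟨h, le_trans (ha.1 hx) h2⟩ (ht hx)
        exact absurd (ha.2 this) (not_le.2 h1)))
    have : c ∈ (Set.Ioc d c)ᶜ := hu ▸ Set.mem_univ c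
    exact this ⟨hlt, le_rfl⟩

include htop in
lemma lemB {c : C} (hc : c ∉ Set.range e) :
    IsGLB {x : C | x ∈ Set.range e ∧ c < x} c := by
  set U := {x : C | x ∈ Set.range e ∧ c < x} with hU
  have hUne : U.Nonempty :=
    ⟨e top, ⟨top, rfl⟩, (le_etop htop hC c).lt_of_ne (fun h => hc ⟨top, h.symm⟩)⟩
  obtain ⟨d, hd⟩ := exists_isGLB hC.1 U hUne ⟨c, fun x hx => hx.2.le⟩
  have hdc : c ≤ d := hd.2 fun x hx => hx.2.le
  rcases eq_or_lt_of_le hdc with rfl | hlt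
  · exact hd
  · exfalso
    have hu := hC.2 (Set.Ico c d)ᶜ
      (by rintro _ ⟨y, rfl⟩ ⟨h1, h2⟩
          exact absurd (hd.1 ⟨⟨y, rfl⟩, h1.lt_of_ne' fun h => hc ⟨y, h⟩⟩) (not_le.2 h2))
      (subtype_complete (by
        intro t ht hne ⟨b, hbS, hb⟩
        obtain ⟨a, ha⟩ := hC.1 t hne ⟨b, fun x hx => hb x hx⟩
        rcases le_or_gt d a with hda | had
        · -- a ∉ Ico c d since d ≤ a
          refine ⟨a, fun ⟨h1, h2⟩ => absurd hda (not_le.2 h2), fun x hx => ha.1 hx,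
            fun b' _ hb' => ha.2 fun x hx => hb' x hx⟩
        · rcases lt_or_ge a c with hac | hca
          · refine ⟨a, fun ⟨h1, h2⟩ => absurd hac (not_lt.2 h1), fun x hx => ha.1 hx,
              fun b' _ hb' => ha.2 fun x hx => hb' x hx⟩
          · -- a ∈ [c, d): use d as the lub within S
            refine ⟨d, fun ⟨h1, h2⟩ => lt_irrefl d h2, fun x hx => le_trans (ha.1 hx) had.le,
              fun b' hb'S hb' => ?_⟩
            have hab' : a ≤ b' := ha.2 fun x hx => hb' x hx
            rcases le_or_gt d b' with h | h
            · exact h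
            · exact absurd ⟨le_trans hca hab', h⟩ hb'S))
    have : c ∈ (Set.Ico c d)ᶜ := hu ▸ Set.mem_univ c
    exact this ⟨le_rfl, hlt⟩

include hbot in
lemma no_between {x y : α} (hadj : ∀ z : α, z ≤ x ∨ y ≤ z) {c : C}
    (hc : c ∉ Set.range e) (h1 : e x < c) (h2 : c < e y) : False := by
  have hA := lemA hbot hC hc
  have : c ≤ e x := hA.2 (by
    rintro _ ⟨⟨z, rfl⟩, hz⟩
    rcases hadj z with h | h
    · exact e.le_iff_le.2 h
    · exact absurd (lt_trans hz (lt_of_lt_of_le h2 (e.le_iff_le.2 h))) (lt_irrefl _))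
  exact absurd (lt_of_lt_of_le h1 this) (lt_irrefl _)

end Minimal
section AlphaSide
open Sum

abbrev Alpha : Type := ℕ ⊕ₗ (ℚ ×ₗ ℤ) ⊕ₗ ℕᵒᵈ
def anat (n : ℕ) : Alpha := toLex (Sum.inl n)
def amid (p : ℚ) (z : ℤ) : Alpha := toLex (Sum.inr (toLex (Sum.inl (toLex (p, z)))))
def adual (n : ℕ) : Alpha := toLex (Sum.inr (toLex (Sum.inr (OrderDual.toDual n))))

lemma alpha_cases (x : Alpha) : (∃ n, x = anat n) ∨ (∃ p z, x = amid p z) ∨ (∃ n, x = adual n) := by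
  rcases x with n | y
  · exact Or.inl ⟨n, rfl⟩
  · rcases y with m | d
    · exact Or.inr (Or.inl ⟨m.1, m.2, rfl⟩)
    · exact Or.inr (Or.inr ⟨d, rfl⟩)

lemma anat_lt_anat {m n : ℕ} : anat m < anat n ↔ m < n := Sum.Lex.inl_lt_inl_iff
lemma anat_lt_amid (n p z) : anat n < amid p z := Sum.Lex.inl_lt_inr _ _
lemma anat_lt_adual (n m) : anat n < adual m := Sum.Lex.inl_lt_inr _ _
lemma amid_lt_amid {p z p' z'} : amid p z < amid p' z' ↔ p < p' ∨ (p = p' ∧ z < z') := by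
  rw [amid, amid, Sum.Lex.inr_lt_inr_iff, Sum.Lex.inl_lt_inl_iff, Prod.Lex.lt_iff]
  exact Iff.rfl
lemma amid_lt_adual (p z n) : amid p z < adual n := by
  rw [amid, adual, Sum.Lex.inr_lt_inr_iff]; exact Sum.Lex.inl_lt_inr _ _
lemma adual_lt_adual {m n} : adual m < adual n ↔ n < m := by
  rw [adual, adual, Sum.Lex.inr_lt_inr_iff, Sum.Lex.inr_lt_inr_iff]
  exact OrderDual.toDual_lt_toDual

lemma anat_zero_le (x : Alpha) : anat 0 ≤ x := by
  rcases alpha_cases x with ⟨n, rfl⟩ | ⟨p, z, rfl⟩ | ⟨n, rfl⟩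
  · rcases Nat.eq_zero_or_pos n with rfl | h
    · exact le_rfl
    · exact (anat_lt_anat.2 h).le
  · exact (anat_lt_amid _ _ _).le
  · exact (anat_lt_adual _ _).le

lemma le_adual_zero (x : Alpha) : x ≤ adual 0 := by
  rcases alpha_cases x with ⟨n, rfl⟩ | ⟨p, z, rfl⟩ | ⟨n, rfl⟩
  · exact (anat_lt_adual _ _).le
  · exact (amid_lt_adual _ _ _).le
  · rcases Nat.eq_zero_or_pos n with rfl | h
    · exact le_rfl
    · exact (adual_lt_adual.2 h).le

lemma amid_fst_eq {p z p' z'} (h : amid p z = amid p' z') : p = p' := by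
  rcases lt_trichotomy p p' with hlt | h' | hlt
  · exact absurd (h ▸ amid_lt_amid.2 (Or.inl hlt)) (lt_irrefl _)
  · exact h'
  · exact absurd (h ▸ amid_lt_amid.2 (Or.inl hlt)) (lt_irrefl _)

lemma amid_ne_anat {p z n} : amid p z ≠ anat n := fun h =>
  absurd (h ▸ anat_lt_amid n p z) (lt_irrefl _)
lemma adual_ne_anat {m n} : adual m ≠ anat n := fun h =>
  absurd (h ▸ anat_lt_adual n m) (lt_irrefl _)
lemma adual_ne_amid {m p z} : adual m ≠ amid p z := fun h =>
  absurd (h ▸ amid_lt_adual p z m) (lt_irrefl _)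

def ASet (Q : Set ℚ) : Set Alpha := {x | (∃ n, x = anat n) ∨ ∃ p z, p ∈ Q ∧ x = amid p z}

lemma anat_mem_ASet {Q : Set ℚ} (n : ℕ) : anat n ∈ ASet Q := Or.inl ⟨n, rfl⟩

lemma amid_mem_ASet {Q : Set ℚ} {p z} : amid p z ∈ ASet Q ↔ p ∈ Q := by
  constructor
  · rintro (⟨n, h⟩ | ⟨p', z', hp', h⟩)
    · exact absurd h amid_ne_anat
    · exact (amid_fst_eq h) ▸ hp'
  · intro hp; exact Or.inr ⟨p, z, hp, rfl⟩

lemma adual_not_mem_ASet {Q : Set ℚ} {n} : adual n ∉ ASet Q := by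
  rintro (⟨m, h⟩ | ⟨p, z, _, h⟩)
  · exact adual_ne_anat h
  · exact adual_ne_amid h

lemma notmem_ASet_upper {Q : Set ℚ} (hQ : IsLowerSet Q) {b : Alpha} (hb : b ∉ ASet Q) :
    ∀ x ∈ ASet Q, x ≤ b := by
  intro x hx
  by_contra hbx
  push_neg at hbx
  apply hb
  rcases hx with ⟨n, rfl⟩ | ⟨p, z, hp, rfl⟩
  · -- b < anat n
    rcases alpha_cases b with ⟨m, rfl⟩ | ⟨p', z', rfl⟩ | ⟨m, rfl⟩
    · exact anat_mem_ASet m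
    · exact absurd (lt_trans hbx (anat_lt_amid _ _ _)) (lt_irrefl _)
    · exact absurd (lt_trans hbx (anat_lt_adual _ _)) (lt_irrefl _)
  · -- b < amid p z
    rcases alpha_cases b with ⟨m, rfl⟩ | ⟨p', z', rfl⟩ | ⟨m, rfl⟩
    · exact anat_mem_ASet m
    · rcases amid_lt_amid.1 hbx with h | ⟨rfl, _⟩
      · exact amid_mem_ASet.2 (hQ h.le hp)
      · exact amid_mem_ASet.2 hp
    · exact absurd (lt_trans hbx (amid_lt_adual _ _ _)) (lt_irrefl _)

lemma ASet_no_max {Q : Set ℚ} {a : Alpha} (ha : a ∈ ASet Q) : ∃ b ∈ ASet Q, a < b := by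
  rcases ha with ⟨n, rfl⟩ | ⟨p, z, hp, rfl⟩
  · exact ⟨anat (n + 1), anat_mem_ASet _, anat_lt_anat.2 (Nat.lt_succ_self n)⟩
  · exact ⟨amid p (z + 1), amid_mem_ASet.2 hp, amid_lt_amid.2 (Or.inr ⟨rfl, lt_add_one z⟩)⟩

lemma ASet_compl_no_min {Q : Set ℚ} {a : Alpha} (ha : a ∉ ASet Q) : ∃ b ∉ ASet Q, b < a := by
  rcases alpha_cases a with ⟨n, rfl⟩ | ⟨p, z, rfl⟩ | ⟨n, rfl⟩
  · exact absurd (anat_mem_ASet n) ha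
  · have hp : p ∉ Q := fun h => ha (amid_mem_ASet.2 h)
    exact ⟨amid p (z - 1), fun h => hp (amid_mem_ASet.1 h),
      amid_lt_amid.2 (Or.inr ⟨rfl, sub_one_lt z⟩)⟩
  · exact ⟨adual (n + 1), adual_not_mem_ASet, adual_lt_adual.2 (Nat.lt_succ_self n)⟩

end AlphaSide

section Gamma
variable {C : Type*} [LinearOrder C] {e : Alpha ↪o C}

noncomputable def gamma (hC : IsCompletion e) (Q : Set ℚ) : C :=
  (hC.1 (e '' ASet Q) ⟨e (anat 0), ⟨anat 0, anat_mem_ASet 0, rfl⟩⟩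
    ⟨e (adual 0), by rintro _ ⟨x, _, rfl⟩; exact e.le_iff_le.2 (le_adual_zero x)⟩).choose

lemma gamma_spec (hC : IsCompletion e) (Q : Set ℚ) : IsLUB (e '' ASet Q) (gamma hC Q) :=
  (hC.1 (e '' ASet Q) ⟨e (anat 0), ⟨anat 0, anat_mem_ASet 0, rfl⟩⟩
    ⟨e (adual 0), by rintro _ ⟨x, _, rfl⟩; exact e.le_iff_le.2 (le_adual_zero x)⟩).choose_spec

lemma gamma_not_mem (hC : IsCompletion e) {Q : Set ℚ} (hQ : IsLowerSet Q) :
    gamma hC Q ∉ Set.range e := by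
  rintro ⟨a, ha⟩
  have hs := gamma_spec hC Q
  rw [← ha] at hs
  -- a is a LUB of ASet Q in Alpha
  have hub : ∀ x ∈ ASet Q, x ≤ a := fun x hx => e.le_iff_le.1 (hs.1 ⟨x, hx, rfl⟩)
  have hleast : ∀ b, (∀ x ∈ ASet Q, x ≤ b) → a ≤ b := fun b hb =>
    e.le_iff_le.1 (hs.2 (by rintro _ ⟨x, hx, rfl⟩; exact e.le_iff_le.2 (hb x hx)))
  by_cases haA : a ∈ ASet Q
  · obtain ⟨b, hbA, hab⟩ := ASet_no_max haA
    exact absurd (lt_of_lt_of_le hab (hub b hbA)) (lt_irrefl _)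
  · obtain ⟨b, hbA, hba⟩ := ASet_compl_no_min haA
    exact absurd (lt_of_lt_of_le hba (hleast b (notmem_ASet_upper hQ hbA))) (lt_irrefl _)

lemma gamma_lt (hC : IsCompletion e) {Q Q' : Set ℚ} (hQ : IsLowerSet Q)
    (hsub : Q ⊆ Q') {p : ℚ} (hp' : p ∈ Q') (hp : p ∉ Q) :
    gamma hC Q < gamma hC Q' := by
  have h1 : gamma hC Q ≤ e (amid p 0) := by
    apply (gamma_spec hC Q).2
    rintro _ ⟨x, hx, rfl⟩
    apply e.le_iff_le.2
    rcases hx with ⟨n, rfl⟩ | ⟨p', z', hp'', rfl⟩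
    · exact (anat_lt_amid _ _ _).le
    · have : p' < p := lt_of_not_ge fun h => hp (hQ h hp'')
      exact (amid_lt_amid.2 (Or.inl this)).le
  have h2 : e (amid p 1) ≤ gamma hC Q' :=
    (gamma_spec hC Q').1 ⟨amid p 1, amid_mem_ASet.2 hp', rfl⟩
  exact lt_of_lt_of_le (lt_of_le_of_lt h1
    (e.lt_iff_lt.2 (amid_lt_amid.2 (Or.inr ⟨rfl, zero_lt_one⟩)))) h2

end Gamma

section MoreAlpha

lemma anat_le_anat {m n : ℕ} : anat m ≤ anat n ↔ m ≤ n := by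
  rw [← not_lt, ← Nat.not_lt, anat_lt_anat]
lemma adual_le_adual {m n : ℕ} : adual m ≤ adual n ↔ n ≤ m := by
  rw [← not_lt, ← Nat.not_lt, adual_lt_adual]

lemma amid_inj {p z p' z'} (h : amid p z = amid p' z') : p = p' ∧ z = z' := by
  obtain rfl := amid_fst_eq h
  refine ⟨rfl, ?_⟩
  rcases lt_trichotomy z z' with hlt | h' | hlt
  · exact absurd (h ▸ amid_lt_amid.2 (Or.inr ⟨rfl, hlt⟩)) (lt_irrefl _)
  · exact h'
  · exact absurd (h ▸ amid_lt_amid.2 (Or.inr ⟨rfl, hlt⟩)) (lt_irrefl _)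

lemma amid_le_amid {p z p' z'} : amid p z ≤ amid p' z' ↔ p < p' ∨ (p = p' ∧ z ≤ z') := by
  rw [le_iff_lt_or_eq, amid_lt_amid]
  constructor
  · rintro ((h | ⟨rfl, h⟩) | h)
    · exact Or.inl h
    · exact Or.inr ⟨rfl, h.le⟩
    · obtain ⟨rfl, rfl⟩ := amid_inj h
      exact Or.inr ⟨rfl, le_rfl⟩
  · rintro (h | ⟨rfl, h⟩)
    · exact Or.inl (Or.inl h)
    · rcases h.lt_or_eq with h | rfl
      · exact Or.inl (Or.inr ⟨rfl, h⟩)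
      · exact Or.inr rfl

end MoreAlpha

section Classify
variable {C : Type*} [LinearOrder C] {e : Alpha ↪o C}

lemma cut_classify (hC : IsCompletion e) {c : C} (hc : c ∉ Set.range e) :
    ∃ Q : Set ℚ, IsLowerSet Q ∧ gamma hC Q = c ∧
      (Q = ∅ ∨ Q = Set.univ ∨
        (∃ q : ℚ, Q = {p : ℚ | (p : ℝ) < (q : ℝ)}) ∨
        (∃ q : ℚ, Q = {p : ℚ | (p : ℝ) ≤ (q : ℝ)}) ∨
        (∃ r : ℝ, Irrational r ∧ Q = {p : ℚ | (p : ℝ) < r})) := by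
  have hnb : ∀ (x y : Alpha), (∀ z, z ≤ x ∨ y ≤ z) → e x < c → c < e y → False :=
    fun x y hadj => no_between anat_zero_le hC hadj hc
  -- every point of the ω part is below c
  have h1 : ∀ n, e (anat n) < c := by
    intro n
    induction n with
    | zero => exact (ebot_le anat_zero_le hC c).lt_of_ne fun h => hc ⟨_, h⟩
    | succ k ih =>
      by_contra h
      have hlt : c < e (anat (k + 1)) :=
        (not_lt.1 h).lt_of_ne' fun h' => hc ⟨_, h'⟩
      refine hnb (anat k) (anat (k + 1)) ?_ ih hlt
      intro z
      rcases alpha_cases z with ⟨m, rfl⟩ | ⟨p, w, rfl⟩ | ⟨m, rfl⟩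
      · rcases le_or_gt m k with h' | h'
        · exact Or.inl (anat_le_anat.2 h')
        · exact Or.inr (anat_le_anat.2 h')
      · exact Or.inr (anat_lt_amid _ _ _).le
      · exact Or.inr (anat_lt_adual _ _).le
  -- every point of the ω* part is above c
  have h2 : ∀ n, c < e (adual n) := by
    intro n
    induction n with
    | zero => exact (le_etop le_adual_zero hC c).lt_of_ne fun h => hc ⟨_, h.symm⟩
    | succ k ih =>
      by_contra h
      have hlt : e (adual (k + 1)) < c :=
        (not_lt.1 h).lt_of_ne fun h' => hc ⟨_, h'⟩
      refine hnb (adual (k + 1)) (adual k) ?_ hlt ih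
      intro z
      rcases alpha_cases z with ⟨m, rfl⟩ | ⟨p, w, rfl⟩ | ⟨m, rfl⟩
      · exact Or.inl (anat_lt_adual _ _).le
      · exact Or.inl (amid_lt_adual _ _ _).le
      · rcases le_or_gt m k with h' | h'
        · exact Or.inr (adual_le_adual.2 h')
        · exact Or.inl (adual_le_adual.2 h')
  -- each copy of ℤ is entirely below or entirely above c
  have h3 : ∀ p : ℚ, (∀ z, e (amid p z) < c) ∨ (∀ z, c < e (amid p z)) := by
    intro p
    by_contra h
    push_neg at h
    obtain ⟨⟨z1, hz1⟩, ⟨z2, hz2⟩⟩ := h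
    have hz1' : c < e (amid p z1) := hz1.lt_of_ne fun h' => hc ⟨_, h'.symm⟩
    have hz2' : e (amid p z2) < c := hz2.lt_of_ne fun h' => hc ⟨_, h'⟩
    obtain ⟨n, hn, hmax⟩ := Int.exists_greatest_of_bdd
      (P := fun w => e (amid p w) < c)
      ⟨z1, fun w hw => by
        by_contra hzw
        push_neg at hzw
        exact absurd (lt_trans (lt_trans hz1'
          (e.lt_iff_lt.2 (amid_lt_amid.2 (Or.inr ⟨rfl, hzw⟩)))) hw) (lt_irrefl _)⟩
      ⟨z2, hz2'⟩
    have hn1 : c < e (amid p (n + 1)) := by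
      have : ¬ e (amid p (n + 1)) < c := fun h' => absurd (hmax _ h') (by omega)
      exact (not_lt.1 this).lt_of_ne' fun h' => hc ⟨_, h'⟩
    refine hnb (amid p n) (amid p (n + 1)) ?_ hn hn1
    intro z
    rcases alpha_cases z with ⟨m, rfl⟩ | ⟨p', w, rfl⟩ | ⟨m, rfl⟩
    · exact Or.inl (anat_lt_amid _ _ _).le
    · rcases lt_trichotomy p' p with h' | rfl | h'
      · exact Or.inl (amid_le_amid.2 (Or.inl h'))
      · rcases le_or_gt w n with h' | h'
        · exact Or.inl (amid_le_amid.2 (Or.inr ⟨rfl, h'⟩))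
        · exact Or.inr (amid_le_amid.2 (Or.inr ⟨rfl, by omega⟩))
      · exact Or.inr (amid_le_amid.2 (Or.inl h'))
    · exact Or.inr (amid_lt_adual _ _ _).le
  set Q : Set ℚ := {p | e (amid p 0) < c} with hQdef
  have hQlow : IsLowerSet Q := by
    intro p' p hle hp
    rcases hle.lt_or_eq with h | rfl
    · exact lt_trans (e.lt_iff_lt.2 (amid_lt_amid.2 (Or.inl h))) hp
    · exact hp
  have hQall : ∀ p ∈ Q, ∀ z, e (amid p z) < c := by
    intro p hp z
    rcases h3 p with h | h
    · exact h z
    · exact absurd hp (not_lt.2 (h 0).le)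
  have hQnone : ∀ p ∉ Q, ∀ z, c < e (amid p z) := by
    intro p hp z
    rcases h3 p with h | h
    · exact absurd (h 0) hp
    · exact h z
  have hgam : gamma hC Q = c := by
    refine (gamma_spec hC Q).unique ⟨?_, ?_⟩
    · rintro _ ⟨x, hx, rfl⟩
      rcases hx with ⟨n, rfl⟩ | ⟨p, z, hp, rfl⟩
      · exact (h1 n).le
      · exact (hQall p hp z).le
    · intro b hb
      refine (lemA anat_zero_le hC hc).2 ?_
      rintro _ ⟨⟨y, rfl⟩, hy⟩
      rcases alpha_cases y with ⟨n, rfl⟩ | ⟨p, z, rfl⟩ | ⟨n, rfl⟩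
      · exact hb ⟨anat n, anat_mem_ASet n, rfl⟩
      · have hp : p ∈ Q := by
          by_contra hp
          exact absurd hy (not_lt.2 (hQnone p hp z).le)
        exact hb ⟨amid p z, amid_mem_ASet.2 hp, rfl⟩
      · exact absurd hy (not_lt.2 (h2 n).le)
  refine ⟨Q, hQlow, hgam, ?_⟩
  by_cases hQe : Q = ∅
  · exact Or.inl hQe
  by_cases hQu : Q = Set.univ
  · exact Or.inr (Or.inl hQu)
  have hne' : Q.Nonempty := Set.nonempty_iff_ne_empty.2 hQe
  obtain ⟨p₀, hp₀⟩ : ∃ p, p ∉ Q := by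
    by_contra h
    push_neg at h
    exact hQu (Set.eq_univ_of_forall h)
  have hmemlt : ∀ p ∈ Q, p < p₀ := fun p hp => lt_of_not_ge fun hh => hp₀ (hQlow hh hp)
  have hbddR : BddAbove ((fun p : ℚ => (p : ℝ)) '' Q) := by
    refine ⟨(p₀ : ℝ), ?_⟩
    rintro _ ⟨p, hp, rfl⟩
    show (p : ℝ) ≤ (p₀ : ℝ)
    exact_mod_cast (hmemlt p hp).le
  set r : ℝ := sSup ((fun p : ℚ => (p : ℝ)) '' Q) with hrdef
  have hsub2 : ∀ p ∈ Q, (p : ℝ) ≤ r := fun p hp => le_csSup hbddR ⟨p, hp, rfl⟩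
  have hsub1 : ∀ p : ℚ, (p : ℝ) < r → p ∈ Q := by
    intro p hp
    by_contra hn
    have : r ≤ (p : ℝ) := by
      refine csSup_le (hne'.image _) ?_
      rintro _ ⟨p', hp', rfl⟩
      show (p' : ℝ) ≤ (p : ℝ)
      exact_mod_cast (lt_of_not_ge fun hh => hn (hQlow hh hp')).le
    exact absurd hp (not_lt.2 this)
  right; right
  by_cases hrat : ∃ q : ℚ, (q : ℝ) = r
  · obtain ⟨q, hq⟩ := hrat
    by_cases hqQ : q ∈ Q
    · refine Or.inr (Or.inl ⟨q, ?_⟩)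
      ext p
      simp only [Set.mem_setOf_eq]
      constructor
      · intro hp; exact hq ▸ hsub2 p hp
      · intro hp
        rcases eq_or_lt_of_le hp with h | h
        · have : p = q := by exact_mod_cast h
          exact this ▸ hqQ
        · exact hsub1 p (hq ▸ h)
    · refine Or.inl ⟨q, ?_⟩
      ext p
      simp only [Set.mem_setOf_eq]
      constructor
      · intro hp
        have hle : (p : ℝ) ≤ (q : ℝ) := hq ▸ hsub2 p hp
        rcases eq_or_lt_of_le hle with h | h
        · have : p = q := by exact_mod_cast h
          exact absurd (this ▸ hp) hqQ
        · exact h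
      · intro hp; exact hsub1 p (hq ▸ hp)
  · refine Or.inr (Or.inr ⟨r, fun ⟨q, hq⟩ => hrat ⟨q, hq⟩, ?_⟩)
    ext p
    simp only [Set.mem_setOf_eq]
    constructor
    · intro hp
      rcases eq_or_lt_of_le (hsub2 p hp) with h | h
      · exact absurd ⟨p, h⟩ hrat
      · exact h
    · exact hsub1 p

end Classify

section TSide
variable (S : ℝ → Type) [∀ r, LinearOrder (S r)]

open Classical in
noncomputable def mFun (r : ℝ) (s : S r) : Set ℚ :=
  if (∃ q : ℚ, (q : ℝ) = r) ∧ ¬(∀ s' : S r, s ≤ s') then {p : ℚ | (p : ℝ) ≤ r}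
  else {p : ℚ | (p : ℝ) < r}

variable {S}

lemma mFun_lower {r : ℝ} {s : S r} : IsLowerSet (mFun S r s) := by
  unfold mFun
  split
  · intro a b hle ha
    simp only [Set.mem_setOf_eq] at ha ⊢
    exact le_trans (show (b : ℝ) ≤ a by exact_mod_cast hle) ha
  · intro a b hle ha
    simp only [Set.mem_setOf_eq] at ha ⊢
    exact lt_of_le_of_lt (show (b : ℝ) ≤ a by exact_mod_cast hle) ha

lemma mFun_subset {r : ℝ} {s : S r} : mFun S r s ⊆ {p : ℚ | (p : ℝ) ≤ r} := by
  unfold mFun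
  split
  · exact fun p hp => hp
  · exact fun p hp => le_of_lt (Set.mem_setOf_eq ▸ hp)

lemma mFun_supset {r : ℝ} {s : S r} : {p : ℚ | (p : ℝ) < r} ⊆ mFun S r s := by
  unfold mFun
  split
  · exact fun p hp => le_of_lt (Set.mem_setOf_eq ▸ hp)
  · exact fun p hp => hp

lemma mFun_of_irr {r : ℝ} (h : ¬∃ q : ℚ, (q : ℝ) = r) (s : S r) :
    mFun S r s = {p : ℚ | (p : ℝ) < r} := by
  unfold mFun
  rw [if_neg (fun hcond => h hcond.1)]

lemma mFun_of_bot {q : ℚ} (f : S (q : ℝ) ≃o Fin 2) {s : S (q : ℝ)} (hs : f s = 0) :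
    mFun S (q : ℝ) s = {p : ℚ | (p : ℝ) < (q : ℝ)} := by
  unfold mFun
  rw [if_neg]
  rintro ⟨-, hn⟩
  exact hn fun s' => f.le_iff_le.1 (hs ▸ Fin.zero_le _)

lemma mFun_of_top {q : ℚ} (f : S (q : ℝ) ≃o Fin 2) {s : S (q : ℝ)} (hs : f s = 1) :
    mFun S (q : ℝ) s = {p : ℚ | (p : ℝ) ≤ (q : ℝ)} := by
  unfold mFun
  rw [if_pos]
  refine ⟨⟨q, rfl⟩, fun hall => ?_⟩
  have := f.le_iff_le.2 (hall (f.symm 0))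
  rw [hs, OrderIso.apply_symm_apply] at this
  exact absurd this (by decide)

lemma fin2_cases (a b : Fin 2) (h : a < b) : a = 0 ∧ b = 1 := by omega

lemma mFun_pair (hSq : ∀ q : ℚ, Nonempty (S q ≃o Fin 2))
    (hSirr : ∀ r : ℝ, Irrational r → Nonempty (S r ≃o PUnit))
    {r : ℝ} {s s' : S r} (h : s < s') :
    (∃ q : ℚ, (q : ℝ) = r ∧ mFun S r s = {p : ℚ | (p : ℝ) < r} ∧
      mFun S r s' = {p : ℚ | (p : ℝ) ≤ r}) := by
  have hrat : ∃ q : ℚ, (q : ℝ) = r := by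
    by_contra hr
    obtain ⟨f⟩ := hSirr r (fun ⟨q, hq⟩ => hr ⟨q, hq⟩)
    exact f.lt_iff_lt.2 h
  obtain ⟨q, rfl⟩ := hrat
  obtain ⟨f⟩ := hSq q
  obtain ⟨h0, h1⟩ := fin2_cases _ _ (f.lt_iff_lt.2 h)
  exact ⟨q, rfl, mFun_of_bot f h0, mFun_of_top f h1⟩

abbrev TT : Type _ := PUnit ⊕ₗ (Σₗ r : ℝ, S r) ⊕ₗ PUnit

variable (S) in
noncomputable def cutT (t : TT (S := S)) : Set ℚ :=
  match ofLex t with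
  | Sum.inl _ => ∅
  | Sum.inr u =>
    match ofLex u with
    | Sum.inl v => mFun S v.1 v.2
    | Sum.inr _ => Set.univ

lemma cutT_lower (t : TT (S := S)) : IsLowerSet (cutT S t) := by
  rcases t with u | y
  · exact fun a b _ h => absurd h (Set.notMem_empty _)
  · rcases y with v | u
    · exact mFun_lower
    · exact fun a b _ _ => Set.mem_univ _

lemma cutT_strict (hSq : ∀ q : ℚ, Nonempty (S q ≃o Fin 2))
    (hSirr : ∀ r : ℝ, Irrational r → Nonempty (S r ≃o PUnit))
    {t t' : TT (S := S)} (h : t < t') :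
    cutT S t ⊆ cutT S t' ∧ ∃ p, p ∈ cutT S t' ∧ p ∉ cutT S t := by
  rcases t with u | y
  · rcases t' with u' | y'
    · exact absurd (Sum.Lex.inl_lt_inl_iff.1 h) id
    · rcases y' with v' | u'
      · obtain ⟨r', s'⟩ := v'
        obtain ⟨p, hp⟩ := exists_rat_lt r'
        exact ⟨fun a ha => absurd ha (Set.notMem_empty _),
          p, mFun_supset hp, Set.notMem_empty _⟩
      · exact ⟨fun a ha => absurd ha (Set.notMem_empty _),
          0, Set.mem_univ _, Set.notMem_empty _⟩
  · rcases t' with u' | y'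
    · exact absurd h Sum.Lex.not_inr_lt_inl
    · have hy : y < y' := Sum.Lex.inr_lt_inr_iff.1 h
      rcases y with v | u
      · rcases y' with v' | u'
        · have hv : v < v' := Sum.Lex.inl_lt_inl_iff.1 hy
          obtain ⟨r, s⟩ := v
          obtain ⟨r', s'⟩ := v'
          rcases Sigma.Lex.lt_def.1 hv with hfst | ⟨hfst, hlt⟩
          · simp only at hfst
            obtain ⟨p, hp1, hp2⟩ := exists_rat_btwn hfst
            refine ⟨fun a ha => mFun_supset (lt_of_le_of_lt (mFun_subset ha) hfst), p,
              mFun_supset hp2, fun hp => absurd (mFun_subset hp) (not_le.2 hp1)⟩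
          · simp only at hfst
            subst hfst
            have hss : s < s' := by simpa using hlt
            obtain ⟨q, hq, hm1, hm2⟩ := mFun_pair hSq hSirr hss
            refine ⟨?_, q, ?_, ?_⟩
            · show mFun S r s ⊆ mFun S r s'
              rw [hm1, hm2]; exact fun p hp => le_of_lt (Set.mem_setOf_eq ▸ hp)
            · show q ∈ mFun S r s'
              rw [hm2]; exact le_of_eq hq
            · show q ∉ mFun S r s
              rw [hm1]; exact fun hlt' => absurd hq (ne_of_lt hlt')
        · obtain ⟨r, s⟩ := v
          obtain ⟨p, hp⟩ := exists_rat_gt r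
          exact ⟨fun a _ => Set.mem_univ _, p, Set.mem_univ _,
            fun hmem => absurd (mFun_subset hmem) (not_le.2 hp)⟩
      · rcases y' with v' | u'
        · exact absurd hy Sum.Lex.not_inr_lt_inl
        · exact absurd (Sum.Lex.inr_lt_inr_iff.1 hy) id

end TSide

/-- the set of gaps of `𝒪 := ω + ζ·η + ω*`, i.e. the complement of `𝒪` in
its completion with the induced order, is isomorphic to `𝟏 + (Σ_{r ∈ ℝ} S_r) + 𝟏`, where
`S_r = 𝟐` for rational `r` and `S_r = 𝟏` for irrational `r`. -/
theorem gaps_of_omega_zeta_eta_omegaStar (C : Type) [LinearOrder C]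
    (e : (ℕ ⊕ₗ (ℚ ×ₗ ℤ) ⊕ₗ ℕᵒᵈ) ↪o C) (hC : IsCompletion e)
    (S : ℝ → Type) [∀ r, LinearOrder (S r)]
    (hSq : ∀ q : ℚ, Nonempty (S q ≃o Fin 2))
    (hSirr : ∀ r : ℝ, Irrational r → Nonempty (S r ≃o PUnit)) :
    Nonempty ({c : C // c ∉ Set.range e} ≃o (PUnit ⊕ₗ (Σₗ r : ℝ, S r) ⊕ₗ PUnit)) := by
  refine ⟨(StrictMono.orderIsoOfSurjective
    (fun t : TT (S := S) =>
      (⟨gamma hC (cutT S t), gamma_not_mem hC (cutT_lower t)⟩ :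
        {c : C // c ∉ Set.range e})) ?_ ?_).symm⟩
  · intro t t' h
    obtain ⟨hsub, p, hp', hp⟩ := cutT_strict hSq hSirr h
    exact Subtype.mk_lt_mk.2 (gamma_lt hC (cutT_lower t) hsub hp' hp)
  · rintro ⟨c, hc⟩
    obtain ⟨Q, hQlow, hgam, hclass⟩ := cut_classify hC hc
    rcases hclass with rfl | rfl | ⟨q, rfl⟩ | ⟨q, rfl⟩ | ⟨r, hirr, rfl⟩
    · exact ⟨toLex (Sum.inl PUnit.unit), Subtype.ext hgam⟩
    · exact ⟨toLex (Sum.inr (toLex (Sum.inr PUnit.unit))), Subtype.ext hgam⟩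
    · obtain ⟨f⟩ := hSq q
      refine ⟨toLex (Sum.inr (toLex (Sum.inl (⟨(q : ℝ), f.symm 0⟩ : Σₗ r : ℝ, S r)))),
        Subtype.ext ?_⟩
      show gamma hC (mFun S (q : ℝ) (f.symm 0)) = c
      rw [mFun_of_bot f (f.apply_symm_apply 0)]
      exact hgam
    · obtain ⟨f⟩ := hSq q
      refine ⟨toLex (Sum.inr (toLex (Sum.inl (⟨(q : ℝ), f.symm 1⟩ : Σₗ r : ℝ, S r)))),
        Subtype.ext ?_⟩
      show gamma hC (mFun S (q : ℝ) (f.symm 1)) = c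
      rw [mFun_of_top f (f.apply_symm_apply 1)]
      exact hgam
    · obtain ⟨f⟩ := hSirr r hirr
      refine ⟨toLex (Sum.inr (toLex (Sum.inl (⟨r, f.symm PUnit.unit⟩ : Σₗ r : ℝ, S r)))),
        Subtype.ext ?_⟩
      show gamma hC (mFun S r (f.symm PUnit.unit)) = c
      rw [mFun_of_irr (fun ⟨q, hq⟩ => hirr ⟨q, hq⟩) (f.symm PUnit.unit)]
      exact hgam
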